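/- arXiv:2309.02841 — 7 statements merged into one kernel-verified Lean document; each statement's English description precedes it below -/
import Mathlib

section
/- Let k ≥ 2 and n ≥ 2, let A be the directed adjacency matrix of the corresponding graph G_k^n, and let u, v be vertices of G_k^n such that the last letter of u is different from the first letter of v. Then the (u,v) entry of A^(n-1) equals 1 and the (u,v) entry of A^(n-2) equals 0 (i.e., there is exactly one directed path of length n-1 from u to v and no directed path of length n-2 from u to v). -/
/-- A word `w` of length `m` over the alphabet `Fin k` is adjacency-hopping if
`w i ≠ w (i+1)` for all `i` with `i + 1 < m`. -/
def IsAdjHop (k m : ℕ) (w : Fin m → Fin k) : Prop :=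
  ∀ i : ℕ, (h : i + 1 < m) → w ⟨i, by omega⟩ ≠ w ⟨i + 1, h⟩

/-- The vertex set of the corresponding graph `G_k^n`: all adjacency-hopping words of
length `n - 1` over `Fin k`. -/
abbrev Vtx (k n : ℕ) : Type := {w : Fin (n - 1) → Fin k // IsAdjHop k (n - 1) w}

/-- The edge relation of `G_k^n`: there is an edge from `u` to `v` iff `v j = u (j+1)`
for all `j` with `j + 1 ≤ n - 2`, and the last letter of `u` differs from the last
letter of `v`. -/
def Edge (k n : ℕ) (u v : Vtx k n) : Prop :=
  (∀ j : ℕ, (h : j + 1 ≤ n - 2) → v.1 ⟨j, by omega⟩ = u.1 ⟨j + 1, by omega⟩) ∧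
  ∀ h : n - 2 < n - 1, u.1 ⟨n - 2, h⟩ ≠ v.1 ⟨n - 2, h⟩

noncomputable instance (k n : ℕ) : Fintype (Vtx k n) := Fintype.ofFinite _

open Classical in
/-- The directed adjacency matrix of `G_k^n` over `ℚ`. -/
noncomputable def AdjMat (k n : ℕ) : Matrix (Vtx k n) (Vtx k n) ℚ :=
  Matrix.of fun u v => if Edge k n u v then 1 else 0

theorem vcong {k m : ℕ} (w : Fin m → Fin k) {a b : ℕ} {ha : a < m} {hb : b < m}
    (h : a = b) : w ⟨a, ha⟩ = w ⟨b, hb⟩ := by subst h; rfl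

/-- `PredP k n t u v` says: `v` agrees with the `t`-shift of `u` on the overlap, and the
last letter of `u` differs from the letter of `v` at the junction position `n-1-t`. -/
def PredP (k n t : ℕ) (u v : Vtx k n) : Prop :=
  (∀ j : ℕ, j + t ≤ n - 2 → ∀ (h2 : j < n - 1) (h3 : j + t < n - 1),
      v.1 ⟨j, h2⟩ = u.1 ⟨j + t, h3⟩) ∧
  (1 ≤ t → ∀ (h2 : n - 2 < n - 1) (h3 : n - 1 - t < n - 1),
      u.1 ⟨n - 2, h2⟩ ≠ v.1 ⟨n - 1 - t, h3⟩)

/-- The unique intermediate word after `t` steps on a `(t+1)`-step path from `u` to `v`. -/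
def Wf (k n t : ℕ) (u v : Vtx k n) : Fin (n - 1) → Fin k :=
  fun j => if h : j.1 + t + 2 ≤ n then u.1 ⟨j.1 + t, by omega⟩
    else v.1 ⟨j.1 - 1, by have := j.isLt; omega⟩

theorem Wf_lo (k n t : ℕ) (u v : Vtx k n) {j : ℕ} {hj : j < n - 1}
    (h : j + t + 2 ≤ n) {h' : j + t < n - 1} :
    Wf k n t u v ⟨j, hj⟩ = u.1 ⟨j + t, h'⟩ := dif_pos h

theorem Wf_hi (k n t : ℕ) (u v : Vtx k n) {j : ℕ} {hj : j < n - 1}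
    (h : ¬ (j + t + 2 ≤ n)) {h' : j - 1 < n - 1} :
    Wf k n t u v ⟨j, hj⟩ = v.1 ⟨j - 1, h'⟩ := dif_neg h

theorem forwardP (k n t : ℕ) (hn : 2 ≤ n) (ht : t + 1 ≤ n - 1) (u w v : Vtx k n)
    (hw : PredP k n t u w) (he : Edge k n w v) : PredP k n (t + 1) u v := by
  constructor
  · intro j hj h2 h3
    have e1 : v.1 ⟨j, h2⟩ = w.1 ⟨j + 1, by omega⟩ := he.1 j (by omega)
    have e2 : w.1 ⟨j + 1, by omega⟩ = u.1 ⟨j + 1 + t, by omega⟩ :=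
      hw.1 (j + 1) (by omega) (by omega) (by omega)
    exact (e1.trans e2).trans (vcong u.1 (by omega))
  · intro _ h2 h3
    rcases Nat.eq_zero_or_pos t with rfl | hpos
    · have huw : w.1 ⟨n - 2, h2⟩ = u.1 ⟨n - 2 + 0, by omega⟩ :=
        hw.1 (n - 2) (by omega) h2 (by omega)
      have hne := he.2 h2
      intro hc
      exact hne ((huw.trans (vcong u.1 (by omega))).trans (hc.trans (vcong v.1 (by omega))))
    · have hj := hw.2 hpos h2 (by omega)
      have e : v.1 ⟨n - 2 - t, by omega⟩ = w.1 ⟨n - 2 - t + 1, by omega⟩ :=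
        he.1 (n - 2 - t) (by omega)
      intro hc
      exact hj ((hc.trans (vcong v.1 (by omega))).trans (e.trans (vcong w.1 (by omega))))

set_option maxHeartbeats 2000000 in
theorem W_adj (k n t : ℕ) (hn : 2 ≤ n) (ht : t + 1 ≤ n - 1) (u v : Vtx k n)
    (hQ : PredP k n (t + 1) u v) : IsAdjHop k (n - 1) (Wf k n t u v) := by
  have hJ := hQ.2 (by omega) (by omega) (by omega)
  intro i hi
  by_cases hb : i + 1 + t + 2 ≤ n
  · rw [Wf_lo k n t u v (h := by omega) (h' := by omega),
      Wf_lo k n t u v (h := hb) (h' := by omega)]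
    have := u.2 (i + t) (by omega)
    exact fun hc => this (hc.trans (vcong u.1 (by omega)))
  · by_cases ha : i + t + 2 ≤ n
    · -- boundary: i + t = n - 2
      rw [Wf_lo k n t u v (h := ha) (h' := by omega),
        Wf_hi k n t u v (h := hb) (h' := by omega)]
      exact fun hc => hJ ((vcong u.1 (by omega)).trans (hc.trans (vcong v.1 (by omega))))
    · have hi1 : 1 ≤ i := by omega
      rw [Wf_hi k n t u v (h := ha) (h' := by omega),
        Wf_hi k n t u v (h := hb) (h' := by omega)]
      have := v.2 (i - 1) (by omega)
      exact fun hc => this (hc.trans (vcong v.1 (by omega)))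

theorem W_pred (k n t : ℕ) (hn : 2 ≤ n) (ht : t + 1 ≤ n - 1) (u v : Vtx k n)
    (hQ : PredP k n (t + 1) u v) (w : Vtx k n) (hwW : w.1 = Wf k n t u v) :
    PredP k n t u w := by
  constructor
  · intro j hj h2 h3
    rw [hwW, Wf_lo k n t u v (h := by omega) (h' := h3)]
  · intro hpos h2 h3
    rw [hwW, Wf_hi k n t u v (h := by omega) (h' := by omega)]
    have hJ := hQ.2 (by omega) h2 (by omega)
    exact fun hc => hJ (hc.trans (vcong v.1 (by omega)))

theorem W_edge (k n t : ℕ) (hn : 2 ≤ n) (ht : t + 1 ≤ n - 1) (u v : Vtx k n)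
    (hQ : PredP k n (t + 1) u v) (w : Vtx k n) (hwW : w.1 = Wf k n t u v) :
    Edge k n w v := by
  constructor
  · intro j hj
    rw [hwW]
    by_cases hc : j + 1 + t + 2 ≤ n
    · rw [Wf_lo k n t u v (h := hc) (h' := by omega)]
      have := hQ.1 j (by omega) (by omega) (by omega)
      exact this.trans (vcong u.1 (by omega))
    · rw [Wf_hi k n t u v (h := hc) (h' := by omega)]
      exact vcong v.1 (by omega)
  · intro h2
    rw [hwW]
    rcases Nat.eq_zero_or_pos t with rfl | hpos
    · rw [Wf_lo k n 0 u v (h := by omega) (h' := by omega)]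
      have hJ := hQ.2 (by omega) h2 (by omega)
      exact fun hc => hJ ((vcong u.1 (by omega)).trans (hc.trans (vcong v.1 (by omega))))
    · rw [Wf_hi k n t u v (h := by omega) (h' := by omega)]
      have hn3 : 3 ≤ n := by omega
      have := v.2 (n - 3) (by omega)
      exact fun hc => this ((vcong v.1 (by omega)).trans (hc.trans (vcong v.1 (by omega))))

theorem W_uniq (k n t : ℕ) (hn : 2 ≤ n) (ht : t + 1 ≤ n - 1) (u v w : Vtx k n)
    (hw : PredP k n t u w) (he : Edge k n w v) : w.1 = Wf k n t u v := by
  funext j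
  rcases j with ⟨j, hjlt⟩
  by_cases hc : j + t + 2 ≤ n
  · rw [Wf_lo k n t u v (h := hc) (h' := by omega)]
    exact hw.1 j (by omega) hjlt (by omega)
  · rw [Wf_hi k n t u v (h := hc) (h' := by omega)]
    have hj1 : 1 ≤ j := by omega
    have e : v.1 ⟨j - 1, by omega⟩ = w.1 ⟨j - 1 + 1, by omega⟩ := he.1 (j - 1) (by omega)
    exact ((e.trans (vcong w.1 (by omega)))).symm

open Classical in
theorem keyP (k n : ℕ) (hn : 2 ≤ n) : ∀ t : ℕ, t ≤ n - 1 → ∀ u v : Vtx k n,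
    (AdjMat k n ^ t) u v = if PredP k n t u v then 1 else 0 := by
  intro t
  induction t with
  | zero =>
    intro _ u v
    rw [pow_zero, Matrix.one_apply]
    refine if_congr ?_ rfl rfl
    constructor
    · rintro rfl
      exact ⟨fun j hj h2 h3 => vcong u.1 (by omega), fun h10 => absurd h10 (by omega)⟩
    · rintro ⟨h1, -⟩
      apply Subtype.ext; funext j
      have hj2 := j.2
      have := h1 j.1 (by omega) j.2 (by omega)
      exact (this.trans (vcong u.1 (by omega))).symm
  | succ t ih =>
    intro ht u v
    have ht' : t ≤ n - 1 := by omega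
    rw [pow_succ, Matrix.mul_apply]
    have hterm : ∀ w : Vtx k n, (AdjMat k n ^ t) u w * AdjMat k n w v
        = if PredP k n t u w ∧ Edge k n w v then 1 else 0 := by
      intro w
      rw [ih ht' u w]
      simp only [AdjMat, Matrix.of_apply]
      by_cases h1 : PredP k n t u w <;> by_cases h2 : Edge k n w v <;> simp [h1, h2]
    simp only [hterm]
    by_cases hQ : PredP k n (t + 1) u v
    · rw [if_pos hQ]
      set w0 : Vtx k n := ⟨Wf k n t u v, W_adj k n t hn ht u v hQ⟩ with hw0
      have hiff : ∀ w : Vtx k n, (PredP k n t u w ∧ Edge k n w v) ↔ w = w0 := by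
        intro w
        constructor
        · rintro ⟨hw, he⟩; exact Subtype.ext (W_uniq k n t hn ht u v w hw he)
        · rintro rfl
          exact ⟨W_pred k n t hn ht u v hQ w0 rfl, W_edge k n t hn ht u v hQ w0 rfl⟩
      simp only [hiff]
      simp
    · rw [if_neg hQ]
      refine Finset.sum_eq_zero fun w _ => ?_
      rw [if_neg]
      rintro ⟨hw, he⟩
      exact hQ (forwardP k n t hn ht u w v hw he)

/-- If the last letter of `u` differs from the first letter of `v`,
then `(A^(n-1))ᵤᵥ = 1` and `(A^(n-2))ᵤᵥ = 0`. -/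
theorem stmt_0 (k n : ℕ) (hk : 2 ≤ k) (hn : 2 ≤ n) (u v : Vtx k n)
    (h : u.1 ⟨n - 2, by omega⟩ ≠ v.1 ⟨0, by omega⟩) :
    (AdjMat k n ^ (n - 1)) u v = 1 ∧ (AdjMat k n ^ (n - 2)) u v = 0 := by
  constructor
  · rw [keyP k n hn (n - 1) le_rfl u v, if_pos]
    constructor
    · intro j hj h2 h3
      exact absurd hj (by omega)
    · intro _ h2 h3
      exact fun hc => h (hc.trans (vcong v.1 (by omega)))
  · rw [keyP k n hn (n - 2) (by omega) u v, if_neg]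
    rintro ⟨h1, -⟩
    have := h1 0 (by omega) (by omega) (by omega)
    exact h ((vcong u.1 (by omega)).trans this.symm)
end

section
/- Let k ≥ 2 and n ≥ 2 and let A be the directed adjacency matrix of the corresponding graph G_k^n. Then A^(n-1) + A^(n-2) = J, where J is the all-ones matrix of the same size as A. -/
namespace Stmt2Aux

variable {k m : ℕ}

lemma vtx_ext {n : ℕ} {u v : Vtx k n}
    (h : ∀ i : ℕ, (hi : i < n - 1) → u.1 ⟨i, hi⟩ = v.1 ⟨i, hi⟩) : u = v :=
  Subtype.ext (funext fun i => by simpa using h i.1 i.2)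

/-- Application congruence for `Fin.mk` arguments with equal values. -/
lemma ac {N : ℕ} {α : Type*} (w : Fin N → α) {a b : ℕ} {ha : a < N} {hb : b < N}
    (hab : a = b) : w ⟨a, ha⟩ = w ⟨b, hb⟩ := by subst hab; rfl

/-- Overlap relation: the first letters of `v` match `u` shifted by `t`,
plus a junction non-equality. -/
def C (t : ℕ) (ht : t ≤ m + 1) (u v : Vtx k (m + 2)) : Prop :=
  (∀ j : ℕ, (hj : j + t ≤ m) → v.1 ⟨j, by omega⟩ = u.1 ⟨j + t, by omega⟩) ∧
  u.1 ⟨t - 1, by omega⟩ ≠ v.1 ⟨0, by omega⟩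

lemma edge_iff_C1 (hm : 1 ≤ m) (u v : Vtx k (m + 2)) :
    Edge k (m + 2) u v ↔ C 1 (by omega) u v := by
  constructor
  · rintro ⟨h1, _⟩
    refine ⟨fun j hj => h1 j (by omega), ?_⟩
    have hv0 : v.1 ⟨0, by omega⟩ = u.1 ⟨0 + 1, by omega⟩ := h1 0 (by omega)
    have hu := u.2 0 (by omega)
    intro hcon
    apply hu
    exact (ac u.1 (show (0:ℕ) = 1 - 1 by omega)).trans (hcon.trans hv0)
  · rintro ⟨h1, h2⟩
    refine ⟨fun j hj => h1 j (by omega), ?_⟩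
    intro h
    have hvm : v.1 ⟨m - 1, by omega⟩ = u.1 ⟨m - 1 + 1, by omega⟩ := h1 (m - 1) (by omega)
    have hv := v.2 (m - 1) (by omega)
    intro hcon
    apply hv
    rw [hvm]
    exact (ac u.1 (show m - 1 + 1 = m + 2 - 2 by omega)).trans
      (hcon.trans (ac v.1 (by omega)))

lemma C_succ_of (hm : 1 ≤ m) {t : ℕ} (ht1 : 1 ≤ t) (ht : t + 1 ≤ m + 1)
    {u w v : Vtx k (m + 2)} (hcw : C t (by omega) u w) (hew : Edge k (m + 2) w v) :
    C (t + 1) ht u v := by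
  obtain ⟨hc1, hc2⟩ := hcw
  obtain ⟨he1, _⟩ := hew
  constructor
  · intro j hj
    have h1 : v.1 ⟨j, by omega⟩ = w.1 ⟨j + 1, by omega⟩ := he1 j (by omega)
    have h2 : w.1 ⟨j + 1, by omega⟩ = u.1 ⟨j + 1 + t, by omega⟩ := hc1 (j + 1) (by omega)
    rw [h1, h2]
    exact ac u.1 (by omega)
  · -- u ⟨t⟩ ≠ v ⟨0⟩
    have hv0 : v.1 ⟨0, by omega⟩ = w.1 ⟨0 + 1, by omega⟩ := he1 0 (by omega)
    by_cases htm : t + 1 ≤ m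
    · have h2 : w.1 ⟨0 + 1, by omega⟩ = u.1 ⟨0 + 1 + t, by omega⟩ := hc1 (0 + 1) (by omega)
      have hu := u.2 t (by omega)
      intro hcon
      apply hu
      exact ((ac u.1 (show t = t + 1 - 1 by omega)).trans hcon).trans
        ((hv0.trans h2).trans (ac u.1 (show 0 + 1 + t = t + 1 by omega)))
    · -- t = m : use w's hopping at position 0 and w 0 = u t
      have hw0 : w.1 ⟨0, by omega⟩ = u.1 ⟨0 + t, by omega⟩ := hc1 0 (by omega)
      have hw := w.2 0 (by omega)
      intro hcon
      apply hw
      exact hw0.trans (((ac u.1 (show 0 + t = t + 1 - 1 by omega)).trans hcon).trans hv0)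

open Classical in
lemma pow_eq (hm : 1 ≤ m) :
    ∀ t, 1 ≤ t → ∀ ht : t ≤ m + 1, ∀ u v : Vtx k (m + 2),
      (AdjMat k (m + 2) ^ t) u v = if C t ht u v then 1 else 0 := by
  intro t ht1
  induction t, ht1 using Nat.le_induction with
  | base =>
    intro ht u v
    rw [pow_one, AdjMat]
    simp only [Matrix.of_apply]
    exact if_congr (edge_iff_C1 hm u v) rfl rfl
  | succ t ht1 IH =>
    intro ht u v
    rw [pow_succ, Matrix.mul_apply]
    have httm : t ≤ m + 1 := by omega
    have hstep : ∀ w : Vtx k (m + 2),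
        (AdjMat k (m + 2) ^ t) u w * AdjMat k (m + 2) w v
          = if (C t httm u w ∧ Edge k (m + 2) w v) then 1 else 0 := by
      intro w
      rw [IH httm u w, AdjMat]
      simp only [Matrix.of_apply]
      by_cases h1 : C t httm u w <;> by_cases h2 : Edge k (m + 2) w v <;> simp [h1, h2]
    simp only [hstep]
    by_cases hC : C (t + 1) ht u v
    · have htlt : t < m + 2 - 1 := by omega
      obtain ⟨h1, h2⟩ := hC
      -- construct the unique intermediate vertex
      have hvidx : ∀ i : ℕ, i < m + 2 - 1 → i - 1 < m + 2 - 1 := by omega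
      set w₀f : Fin (m + 2 - 1) → Fin k := fun i =>
        if (i : ℕ) = 0 then u.1 ⟨t, htlt⟩ else v.1 ⟨(i : ℕ) - 1, hvidx i.1 i.2⟩ with hw₀f
      have w₀f0 : ∀ p : 0 < m + 2 - 1, w₀f ⟨0, p⟩ = u.1 ⟨t, htlt⟩ := fun p => if_pos rfl
      have w₀fs : ∀ (x : ℕ) (p : x < m + 2 - 1) (hx : x ≠ 0) (q : x - 1 < m + 2 - 1),
          w₀f ⟨x, p⟩ = v.1 ⟨x - 1, q⟩ := fun x p hx q => if_neg hx
      have hop : IsAdjHop k (m + 2 - 1) w₀f := by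
        intro i hi
        by_cases hi0 : i = 0
        · subst hi0
          rw [w₀f0, w₀fs 1 (by omega) (by omega) (by omega)]
          intro hcon
          apply h2
          exact (ac u.1 (show t + 1 - 1 = t by omega)).trans
            (hcon.trans (ac v.1 (by omega)))
        · rw [w₀fs i (by omega) hi0 (by omega), w₀fs (i + 1) (by omega) (by omega) (by omega)]
          have hv := v.2 (i - 1) (by omega)
          intro hcon
          apply hv
          exact hcon.trans (ac v.1 (by omega))
      set w₀ : Vtx k (m + 2) := ⟨w₀f, hop⟩ with hw₀
      have hiff : ∀ w : Vtx k (m + 2),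
          (C t httm u w ∧ Edge k (m + 2) w v) ↔ w = w₀ := by
        intro w
        constructor
        · rintro ⟨⟨hc1, _⟩, ⟨he1, _⟩⟩
          apply vtx_ext
          intro i hilt
          show w.1 ⟨i, hilt⟩ = w₀f ⟨i, hilt⟩
          by_cases hi0 : i = 0
          · subst hi0
            rw [w₀f0]
            exact (hc1 0 (by omega)).trans (ac u.1 (by omega))
          · rw [w₀fs i hilt hi0 (by omega)]
            have := he1 (i - 1) (by omega)
            exact ((ac w.1 (show i = i - 1 + 1 by omega)).trans (this.symm))
        · rintro rfl
          refine ⟨⟨?_, ?_⟩, ?_, ?_⟩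
          · intro j hj
            show w₀f ⟨j, by omega⟩ = _
            by_cases hj0 : j = 0
            · subst hj0
              rw [w₀f0]
              exact ac u.1 (by omega)
            · rw [w₀fs j (by omega) hj0 (by omega)]
              exact (h1 (j - 1) (by omega)).trans (ac u.1 (by omega))
          · show _ ≠ w₀f ⟨0, by omega⟩
            rw [w₀f0]
            have hu := u.2 (t - 1) (by omega)
            intro hcon
            apply hu
            exact hcon.trans (ac u.1 (by omega))
          · intro j hj
            show _ = w₀f ⟨j + 1, by omega⟩
            rw [w₀fs (j + 1) (by omega) (by omega) (by omega)]
            exact ac v.1 (by omega)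
          · intro hlt
            show w₀f ⟨m + 2 - 2, hlt⟩ ≠ _
            rw [w₀fs (m + 2 - 2) hlt (by omega) (by omega)]
            have hv := v.2 (m - 1) (by omega)
            intro hcon
            apply hv
            exact (ac v.1 (by omega)).trans (hcon.trans (ac v.1 (by omega)))
      rw [if_pos ⟨h1, h2⟩]
      calc (∑ w : Vtx k (m + 2), if C t httm u w ∧ Edge k (m + 2) w v then (1 : ℚ) else 0)
          = ∑ w : Vtx k (m + 2), if w = w₀ then (1 : ℚ) else 0 :=
            Finset.sum_congr rfl fun w _ => if_congr (hiff w) rfl rfl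
        _ = 1 := by simp
    · rw [if_neg hC]
      apply Finset.sum_eq_zero
      intro w _
      rw [if_neg]
      rintro ⟨hcw, hew⟩
      exact hC (C_succ_of hm ht1 ht hcw hew)

open Classical in
lemma pow_top (hm : 1 ≤ m) (u v : Vtx k (m + 2)) :
    (AdjMat k (m + 2) ^ (m + 1)) u v
      = if u.1 ⟨m, by omega⟩ = v.1 ⟨0, by omega⟩ then 0 else 1 := by
  rw [pow_eq hm (m + 1) (by omega) (le_refl _) u v]
  have hiff : C (m + 1) (le_refl _) u v ↔ ¬(u.1 ⟨m, by omega⟩ = v.1 ⟨0, by omega⟩) := by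
    constructor
    · rintro ⟨_, h2⟩ hcon
      exact h2 ((ac u.1 (show m + 1 - 1 = m by omega)).trans hcon)
    · intro h
      refine ⟨fun j hj => absurd hj (by omega), ?_⟩
      intro hcon
      exact h ((ac u.1 (show m = m + 1 - 1 by omega)).trans hcon)
  rw [if_congr hiff rfl rfl, ite_not]

open Classical in
lemma pow_m (hm : 1 ≤ m) (u v : Vtx k (m + 2)) :
    (AdjMat k (m + 2) ^ m) u v
      = if u.1 ⟨m, by omega⟩ = v.1 ⟨0, by omega⟩ then 1 else 0 := by
  rw [pow_eq hm m hm (by omega) u v]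
  apply if_congr _ rfl rfl
  constructor
  · rintro ⟨h1, _⟩
    exact ((h1 0 (by omega)).trans (ac u.1 (by omega))).symm
  · intro h
    constructor
    · intro j hj
      have hj0 : j = 0 := by omega
      subst hj0
      exact h.symm.trans (ac u.1 (by omega))
    · intro hcon
      have hu := u.2 (m - 1) (by omega)
      apply hu
      exact hcon.trans (h.symm.trans (ac u.1 (by omega)))

end Stmt2Aux

open Stmt2Aux in
/-- `A^(n-1) + A^(n-2) = J`, the all-ones matrix. -/
theorem stmt_2 (k n : ℕ) (hk : 2 ≤ k) (hn : 2 ≤ n) :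
    AdjMat k n ^ (n - 1) + AdjMat k n ^ (n - 2) =
      Matrix.of fun _ _ => (1 : ℚ) := by
  classical
  obtain ⟨m, rfl⟩ : ∃ m, n = m + 2 := ⟨n - 2, by omega⟩
  simp only [show m + 2 - 1 = m + 1 from rfl, show m + 2 - 2 = m from rfl]
  rcases Nat.eq_zero_or_pos m with rfl | hm
  · -- n = 2 case
    ext u v
    rw [show AdjMat k (0 + 2) ^ (0 + 1) = AdjMat k (0 + 2) from pow_one _, pow_zero]
    simp only [Matrix.add_apply, Matrix.of_apply, Matrix.one_apply]
    rw [AdjMat]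
    simp only [Matrix.of_apply]
    by_cases h : u.1 ⟨0, by omega⟩ = v.1 ⟨0, by omega⟩
    · have huv : u = v := vtx_ext fun i hi => by
        have : i = 0 := by omega
        subst this; exact h
      have hne : ¬ Edge k (0 + 2) u v := fun hc => hc.2 (by omega) h
      rw [if_pos huv, if_neg hne]
      norm_num
    · have hed : Edge k (0 + 2) u v := ⟨fun j hj => absurd hj (by omega), fun _ => h⟩
      have hne : u ≠ v := fun hc => h (by rw [hc])
      rw [if_pos hed, if_neg hne]
      norm_num
  · ext u v
    rw [Matrix.add_apply, pow_top hm u v, pow_m hm u v]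
    simp only [Matrix.of_apply]
    split_ifs <;> norm_num
end

section
/- Let k ≥ 2 and n ≥ 2. The corresponding graph G_k^n is strongly connected: for any two vertices u and v of G_k^n, the vertex v is reachable from u, i.e., the pair (u,v) lies in the reflexive-transitive closure of the directed edge relation of G_k^n. -/
lemma fin_congr {k L : ℕ} (w : Fin L → Fin k) {a b : ℕ} (ha : a < L) (hb : b < L)
    (h : a = b) : w ⟨a, ha⟩ = w ⟨b, hb⟩ := by subst h; rfl

lemma key (k m : ℕ) (u v : Vtx k (m + 2))
    (hne : u.1 ⟨m, by omega⟩ ≠ v.1 ⟨0, by omega⟩) :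
    Relation.ReflTransGen (Edge k (m + 2)) u v := by
  have hpos : 0 < m + 1 := Nat.succ_pos m
  have hmod : ∀ a, m + 1 ≤ a → a < 2 * (m + 1) → a % (m + 1) = a - (m + 1) := by
    intro a h1 h2
    rw [Nat.mod_eq_sub_mod h1, Nat.mod_eq_of_lt (by omega)]
  set W : ℕ → Fin (m + 2 - 1) → Fin k := fun i j =>
    if h : (j : ℕ) + i < m + 1 then u.1 ⟨(j : ℕ) + i, by omega⟩
    else v.1 ⟨((j : ℕ) + i) % (m + 1), Nat.mod_lt _ hpos⟩ with hWdef
  have hop : ∀ i, i ≤ m + 1 → IsAdjHop k (m + 2 - 1) (W i) := by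
    intro i hi j hj
    simp only [hWdef]
    split_ifs with h1 h2 h2
    · intro hh
      exact u.2 (j + i) (by omega)
        (hh.trans (fin_congr u.1 (by omega) (by omega) (by omega)))
    · have e2 : (j + 1 + i) % (m + 1) = 0 := by
        rw [hmod _ (by omega) (by omega)]; omega
      intro hh
      exact hne ((fin_congr u.1 (by omega) (by omega) (by omega : m = j + i)).trans
        (hh.trans (fin_congr v.1 (by omega) (by omega) e2)))
    · omega
    · have e1 : (j + i) % (m + 1) = j + i - (m + 1) := hmod _ (by omega) (by omega)
      have e2 : (j + 1 + i) % (m + 1) = (j + i - (m + 1)) + 1 := by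
        rw [hmod _ (by omega) (by omega)]; omega
      intro hh
      exact v.2 (j + i - (m + 1)) (by omega)
        ((fin_congr v.1 (by omega) (by omega) e1.symm).trans
          (hh.trans (fin_congr v.1 (by omega) (by omega) e2)))
  have edge : ∀ i (hi : i < m + 1),
      Edge k (m + 2) ⟨W i, hop i (by omega)⟩ ⟨W (i + 1), hop (i + 1) (by omega)⟩ := by
    intro i hi
    constructor
    · intro j hj
      simp only [hWdef]
      split_ifs with h1 h2 h2
      · exact fin_congr u.1 (by omega) (by omega) (by omega)
      · omega
      · omega
      · exact fin_congr v.1 (Nat.mod_lt _ hpos) (Nat.mod_lt _ hpos)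
          (by rw [show (j : ℕ) + (i + 1) = (j : ℕ) + 1 + i from by omega])
    · intro h
      simp only [hWdef]
      rcases Nat.eq_zero_or_pos i with rfl | hip
      · rw [dif_pos (by omega : m + 2 - 2 + 0 < m + 1),
          dif_neg (by omega : ¬ (m + 2 - 2 + (0 + 1) < m + 1))]
        have e2 : (m + 2 - 2 + (0 + 1)) % (m + 1) = 0 := by
          rw [hmod _ (by omega) (by omega)]; omega
        intro hh
        exact hne ((fin_congr u.1 (by omega) (by omega) (by omega : m = m + 2 - 2 + 0)).trans
          (hh.trans (fin_congr v.1 (by omega) (by omega) e2)))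
      · rw [dif_neg (by omega : ¬ (m + 2 - 2 + i < m + 1)),
          dif_neg (by omega : ¬ (m + 2 - 2 + (i + 1) < m + 1))]
        have e1 : (m + 2 - 2 + i) % (m + 1) = i - 1 := by
          rw [hmod _ (by omega) (by omega)]; omega
        have e2 : (m + 2 - 2 + (i + 1)) % (m + 1) = i - 1 + 1 := by
          rw [hmod _ (by omega) (by omega)]; omega
        intro hh
        exact v.2 (i - 1) (by omega)
          ((fin_congr v.1 (by omega) (by omega) e1.symm).trans
            (hh.trans (fin_congr v.1 (by omega) (by omega) e2)))
  have reach : ∀ i, (hi : i ≤ m + 1) →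
      Relation.ReflTransGen (Edge k (m + 2)) u ⟨W i, hop i hi⟩ := by
    intro i
    induction i with
    | zero =>
      intro _
      have : u = ⟨W 0, hop 0 (by omega)⟩ := by
        apply Subtype.ext
        funext j
        simp only [hWdef]
        rw [dif_pos (by omega)]
        exact fin_congr u.1 j.isLt (by omega) (by omega)
      rw [← this]
    | succ i ih =>
      intro hi
      exact (ih (by omega)).tail (edge i (by omega))
  have hfin : (⟨W (m + 1), hop (m + 1) le_rfl⟩ : Vtx k (m + 2)) = v := by
    apply Subtype.ext
    funext j
    simp only [hWdef]
    rw [dif_neg (by omega)]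
    have e : ((j : ℕ) + (m + 1)) % (m + 1) = (j : ℕ) := by
      rw [hmod _ (by omega) (by omega)]; omega
    exact fin_congr v.1 (Nat.mod_lt _ hpos) j.isLt e
  exact hfin ▸ reach (m + 1) le_rfl

/-- `G_k^n` is strongly connected. -/
theorem stmt_3 (k n : ℕ) (hk : 2 ≤ k) (hn : 2 ≤ n) (u v : Vtx k n) :
    Relation.ReflTransGen (Edge k n) u v := by
  obtain ⟨m, rfl⟩ : ∃ m, n = m + 2 := ⟨n - 2, by omega⟩
  by_cases hc : u.1 ⟨m, by omega⟩ = v.1 ⟨0, by omega⟩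
  · have : Nontrivial (Fin k) := Fin.nontrivial_iff_two_le.mpr hk
    obtain ⟨c, hcne⟩ := exists_ne (v.1 ⟨0, by omega⟩)
    set W : Fin (m + 2 - 1) → Fin k := fun j =>
      if h : (j : ℕ) + 1 < m + 1 then u.1 ⟨(j : ℕ) + 1, by omega⟩ else c with hWdef
    have hop : IsAdjHop k (m + 2 - 1) W := by
      intro j hj
      simp only [hWdef]
      split_ifs with h1 h2 h2
      · intro hh
        exact u.2 (j + 1) (by omega)
          (hh.trans (fin_congr u.1 (by omega) (by omega) (by omega)))
      · have : u.1 ⟨j + 1, by omega⟩ = v.1 ⟨0, by omega⟩ :=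
          (fin_congr u.1 (by omega) (by omega) (by omega : j + 1 = m)).trans hc
        rw [this]
        exact fun h => hcne h.symm
      · omega
      · omega
    have he : Edge k (m + 2) u ⟨W, hop⟩ := by
      constructor
      · intro j hj
        simp only [hWdef]
        rw [dif_pos (by omega)]
      · intro h
        simp only [hWdef]
        rw [dif_neg (by omega)]
        have : u.1 ⟨m + 2 - 2, h⟩ = v.1 ⟨0, by omega⟩ :=
          (fin_congr u.1 (by omega) (by omega) (by omega : m + 2 - 2 = m)).trans hc
        rw [this]
        exact fun hh => hcne hh.symm
    have hW : (⟨W, hop⟩ : Vtx k (m + 2)).1 ⟨m, by omega⟩ ≠ v.1 ⟨0, by omega⟩ := by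
      simp only [hWdef]
      rw [dif_neg (by omega)]
      exact hcne
    exact Relation.ReflTransGen.head he (key k m ⟨W, hop⟩ v hW)
  · exact key k m u v hc
end

section
/- Let k ≥ 2 and n ≥ 2. The corresponding graph G_k^n is balanced with all degrees equal to k-1: for every vertex u of G_k^n, the number of vertices v such that there is an edge from u to v equals k-1, and the number of vertices v such that there is an edge from v to u also equals k-1. -/
/-- Index-cast helper for words. -/
lemma wcast {k m : ℕ} (w : Fin m → Fin k) {a b : ℕ} (ha : a < m) (hb : b < m)
    (hab : a = b) : w ⟨a, ha⟩ = w ⟨b, hb⟩ := by subst hab; rfl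

/-- Every vertex of `G_k^n` has outdegree `k - 1` and indegree `k - 1`. -/
theorem stmt_4 (k n : ℕ) (hk : 2 ≤ k) (hn : 2 ≤ n) (u : Vtx k n) :
    Nat.card {v : Vtx k n // Edge k n u v} = k - 1 ∧
      Nat.card {v : Vtx k n // Edge k n v u} = k - 1 := by
  have hm : 1 ≤ n - 1 := by omega
  have hlast : n - 2 < n - 1 := by omega
  constructor
  · -- out-degree
    have e : {v : Vtx k n // Edge k n u v} ≃ {c : Fin k // c ≠ u.1 ⟨n - 2, hlast⟩} :=
      { toFun := fun v => ⟨v.1.1 ⟨n - 2, hlast⟩, fun h => v.2.2 hlast h.symm⟩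
        invFun := fun c =>
          ⟨⟨fun i => if h : (i : ℕ) + 1 < n - 1 then u.1 ⟨(i : ℕ) + 1, h⟩ else c.1, by
              intro i h
              simp only [dif_pos h]
              by_cases h2 : i + 1 + 1 < n - 1
              · simp only [dif_pos h2]
                exact u.2 (i + 1) h2
              · simp only [dif_neg h2]
                rw [wcast u.1 (by omega) hlast (show i + 1 = n - 2 by omega)]
                exact fun hc => c.2 hc.symm⟩, by
            constructor
            · intro j hj
              simp only [dif_pos (show j + 1 < n - 1 by omega)]
            · intro h
              simp only [dif_neg (show ¬ (n - 2 + 1 < n - 1) by omega)]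
              exact fun hc => c.2 hc.symm⟩
        left_inv := by
          intro v
          apply Subtype.ext
          apply Subtype.ext
          funext i
          by_cases h : (i : ℕ) + 1 < n - 1
          · simp only [dif_pos h]
            exact (v.2.1 (i : ℕ) (by omega)).symm
          · simp only [dif_neg h]
            exact congrArg v.1.1 (Fin.ext (show n - 2 = (i : ℕ) by
              have := i.isLt; omega))
        right_inv := by
          intro c
          apply Subtype.ext
          simp only [dif_neg (show ¬ (n - 2 + 1 < n - 1) by omega)] }
    rw [Nat.card_congr e]
    simp [Nat.card_eq_fintype_card, Fintype.card_subtype_compl]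
  · -- in-degree
    have h0 : 0 < n - 1 := by omega
    have e : {v : Vtx k n // Edge k n v u} ≃ {c : Fin k // c ≠ u.1 ⟨0, h0⟩} :=
      { toFun := fun v => ⟨v.1.1 ⟨0, h0⟩, by
          by_cases hn3 : 3 ≤ n
          · have h1 : 1 < n - 1 := by omega
            have hv : v.1.1 ⟨0, h0⟩ ≠ v.1.1 ⟨1, h1⟩ := v.1.2 0 h1
            have he : u.1 ⟨0, h0⟩ = v.1.1 ⟨1, h1⟩ := v.2.1 0 (by omega)
            rw [he]; exact hv
          · have := v.2.2 hlast
            intro hc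
            apply this
            rw [wcast u.1 hlast h0 (by omega), ← hc]
            exact congrArg v.1.1 (Fin.ext (show n - 2 = 0 by omega))⟩
        invFun := fun c =>
          ⟨⟨fun i => if h : (i : ℕ) = 0 then c.1 else u.1 ⟨(i : ℕ) - 1, by omega⟩, by
              intro i h
              by_cases hi : i = 0
              · subst hi
                simp only [dif_pos rfl, dif_neg (show ¬ (0 + 1 = 0) by omega)]
                intro hc
                exact c.2 (hc.trans (wcast u.1 (by omega) h0 (by omega)))
              · simp only [dif_neg hi, dif_neg (show ¬ (i + 1 = 0) by omega)]
                have h2 := u.2 (i - 1) (show i - 1 + 1 < n - 1 by omega)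
                rwa [wcast u.1 (by omega) (by omega)
                  (show i - 1 + 1 = i + 1 - 1 by omega)] at h2⟩, by
            constructor
            · intro j hj
              simp only [dif_neg (show ¬ (j + 1 = 0) by omega)]
              exact wcast u.1 (by omega) (by omega) (by omega)
            · intro h
              by_cases hz : n - 2 = 0
              · simp only [dif_pos hz]
                intro hc
                exact c.2 (hc.trans (wcast u.1 h h0 hz))
              · simp only [dif_neg hz]
                have h2 := u.2 (n - 2 - 1) (show n - 2 - 1 + 1 < n - 1 by omega)
                rwa [wcast u.1 (by omega) h (show n - 2 - 1 + 1 = n - 2 by omega)] at h2⟩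
        left_inv := by
          intro v
          apply Subtype.ext
          apply Subtype.ext
          funext i
          by_cases h : (i : ℕ) = 0
          · simp only [dif_pos h]
            exact congrArg v.1.1 (Fin.ext (show (0 : ℕ) = (i : ℕ) from h.symm))
          · simp only [dif_neg h]
            exact (v.2.1 ((i : ℕ) - 1) (by have := i.isLt; omega)).trans
              (congrArg v.1.1 (Fin.ext (show (i : ℕ) - 1 + 1 = (i : ℕ) by omega)))
        right_inv := by
          intro c
          apply Subtype.ext
          simp }
    rw [Nat.card_congr e]
    simp [Nat.card_eq_fintype_card, Fintype.card_subtype_compl]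
end

section
/- Let k ≥ 2, n ≥ 2 and L ≥ 1. If s : ZMod L → Fin k is an adjacency-hopping de Bruijn sequence H(k,n), then L = k·(k-1)^(n-1). -/
/-- `s : ZMod L → Fin k` is an adjacency-hopping de Bruijn sequence `H(k,n)` if all
neighboring codes differ and every adjacency-hopping word of length `n` occurs exactly
once as a (cyclic) subsequence. -/
def IsAHDB (k n L : ℕ) (s : ZMod L → Fin k) : Prop :=
  (∀ i, s i ≠ s (i + 1)) ∧
  ∀ w : Fin n → Fin k, IsAdjHop k n w →
    ∃! i : ZMod L, ∀ j : Fin n, s (i + (j : ℕ)) = w j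


def finZModEquiv (k : ℕ) [NeZero k] : Fin k ≃ ZMod k where
  toFun i := (i : ℕ)
  invFun a := ⟨a.val, ZMod.val_lt a⟩
  left_inv i := by
    ext
    simp [ZMod.val_cast_of_lt i.isLt]
  right_inv a := by simp [ZMod.natCast_zmod_val]

def ZHop (k p : ℕ) : Type := {v : Fin (p+1) → ZMod k // ∀ t : Fin p, v t.succ ≠ v t.castSucc}

noncomputable instance (k p : ℕ) [NeZero k] : Fintype (ZHop k p) := by
  unfold ZHop
  classical
  infer_instance

noncomputable def zhopEquiv (k p : ℕ) [NeZero k] :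
    ZHop k p ≃ ZMod k × (Fin p → {c : ZMod k // c ≠ 0}) where
  toFun v := ⟨v.1 0, fun t => ⟨v.1 t.succ - v.1 t.castSucc, sub_ne_zero.2 (v.2 t)⟩⟩
  invFun x := ⟨fun j => x.1 + ∑ t ∈ Finset.range j, (if h : t < p then (x.2 ⟨t, h⟩ : ZMod k) else 0),
    by
      intro t
      simp only [Fin.val_succ, Fin.coe_castSucc, Finset.sum_range_succ, ne_eq, ← add_assoc,
        dif_pos t.isLt]
      simpa [add_eq_left] using (x.2 ⟨(t : ℕ), t.isLt⟩).2⟩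
  left_inv v := by
    apply Subtype.ext
    funext j
    simp only
    induction j using Fin.induction with
    | zero => simp
    | succ t ih =>
      have ht : (t.succ : ℕ) = (t.castSucc : ℕ) + 1 := rfl
      rw [ht, Finset.sum_range_succ, ← add_assoc, ih,
        dif_pos (show ((t.castSucc : ℕ)) < p from t.isLt)]
      have : (⟨(t.castSucc : ℕ), t.isLt⟩ : Fin p) = t := by ext; rfl
      rw [this]
      ring
  right_inv x := by
    ext t
    · simp
    · simp only [Fin.val_succ, Fin.coe_castSucc, Finset.sum_range_succ, dif_pos t.isLt]
      have : (⟨(t : ℕ), t.isLt⟩ : Fin p) = t := by ext; rfl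
      rw [this]
      ring

lemma card_nz (k : ℕ) [NeZero k] : Fintype.card {c : ZMod k // c ≠ 0} = k - 1 := by
  have : Fintype.card {c : ZMod k // c ≠ 0} = Fintype.card {c : ZMod k // ¬ c = 0} := rfl
  rw [this, Fintype.card_subtype_compl, Fintype.card_subtype_eq, ZMod.card]

lemma card_zhop (k p : ℕ) [NeZero k] : Fintype.card (ZHop k p) = k * (k - 1) ^ p := by
  rw [Fintype.card_congr (zhopEquiv k p), Fintype.card_prod, Fintype.card_fun, ZMod.card,
    card_nz, Fintype.card_fin]

def hopEquiv (k p : ℕ) [NeZero k] :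
    {w : Fin (p+1) → Fin k // IsAdjHop k (p+1) w} ≃ ZHop k p where
  toFun w := ⟨fun j => finZModEquiv k (w.1 j), by
    intro t
    have := w.2 t (by omega)
    simp only [ne_eq, EmbeddingLike.apply_eq_iff_eq]
    intro h
    apply this
    rw [show (⟨(t:ℕ), by omega⟩ : Fin (p+1)) = t.castSucc from rfl,
      show (⟨(t:ℕ)+1, by omega⟩ : Fin (p+1)) = t.succ from rfl]
    exact h.symm⟩
  invFun v := ⟨fun j => (finZModEquiv k).symm (v.1 j), by
    intro i h
    have := v.2 ⟨i, by omega⟩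
    simp only [ne_eq, EmbeddingLike.apply_eq_iff_eq]
    intro hh
    apply this
    rw [show (⟨i, by omega⟩ : Fin p).succ = ⟨i+1, h⟩ from rfl,
      show (⟨i, by omega⟩ : Fin p).castSucc = ⟨i, by omega⟩ from rfl]
    exact hh.symm⟩
  left_inv w := by ext j; simp
  right_inv v := by
    apply Subtype.ext
    funext j
    simp


/-- Any adjacency-hopping de Bruijn sequence `H(k,n)` of length `L`
has `L = k * (k-1)^(n-1)`. -/
theorem stmt_7 (k n L : ℕ) (hk : 2 ≤ k) (hn : 2 ≤ n) (hL : 1 ≤ L)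
    (s : ZMod L → Fin k) (hs : IsAHDB k n L s) :
    L = k * (k - 1) ^ (n - 1) := by
  haveI : NeZero L := ⟨by omega⟩
  haveI : NeZero k := ⟨by omega⟩
  obtain ⟨p, rfl⟩ : ∃ p, n = p + 1 := ⟨n - 1, by omega⟩
  have hadj : ∀ i : ZMod L, IsAdjHop k (p+1) (fun j => s (i + (j : ℕ))) := by
    intro i i' h
    simp only
    push_cast
    rw [← add_assoc]
    exact hs.1 (i + (i' : ZMod L))
  have hbij : Function.Bijective
      (fun i : ZMod L => (⟨fun j => s (i + (j : ℕ)), hadj i⟩ :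
        {w : Fin (p+1) → Fin k // IsAdjHop k (p+1) w})) := by
    constructor
    · intro i₁ i₂ h
      rw [Subtype.mk.injEq] at h
      have h' : ∀ j : Fin (p+1), s (i₂ + (j : ℕ)) = (fun j : Fin (p+1) => s (i₁ + (j : ℕ))) j := by
        intro j; exact (congrFun h j).symm
      exact (hs.2 _ (hadj i₁)).unique (fun j => rfl) h'
    · rintro ⟨w, hw⟩
      obtain ⟨i, hi, -⟩ := hs.2 w hw
      exact ⟨i, Subtype.ext (funext hi)⟩
  have E := (Equiv.ofBijective _ hbij).trans (hopEquiv k p)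
  have := Fintype.card_congr E
  rw [ZMod.card, card_zhop] at this
  simpa using this
end

section
/- Let k ≥ 2 and n ≥ 2, let A be the directed adjacency matrix of the corresponding graph G_k^n, and set ℓ = k·(k-1)^(n-2). Then the characteristic polynomial of A over ℚ equals (X - (k-1)) · (X + 1)^(k-1) · X^(ℓ - k); equivalently, the eigenvalues of A are k-1 with multiplicity 1, -1 with multiplicity k-1, and 0 with multiplicity ℓ - k. -/
open Polynomial Matrix

def sufFn {k m : ℕ} (w : Fin (m + 1) → Fin k) : Fin m → Fin k := fun j => w j.succ
def preFn {k m : ℕ} (w : Fin (m + 1) → Fin k) : Fin m → Fin k := fun j => w j.castSucc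

lemma isAdjHop_sufFn {k m : ℕ} {w : Fin (m + 1) → Fin k} (h : IsAdjHop k (m + 1) w) :
    IsAdjHop k m (sufFn w) := fun i hi => h (i + 1) (by omega)

lemma isAdjHop_preFn {k m : ℕ} {w : Fin (m + 1) → Fin k} (h : IsAdjHop k (m + 1) w) :
    IsAdjHop k m (preFn w) := fun i hi => h i (by omega)

lemma isAdjHop_snoc {k m : ℕ} {s : Fin (m + 1) → Fin k} (hs : IsAdjHop k (m + 1) s)
    {x : Fin k} (hx : x ≠ s ⟨m, Nat.lt_succ_self m⟩) :
    IsAdjHop k (m + 2) (Fin.snoc s x) := by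
  intro i hi
  by_cases h : i + 1 < m + 1
  · have e1 := Fin.snoc_castSucc (α := fun _ => Fin k) (p := s) (x := x)
      (i := ⟨i, by omega⟩)
    have e2 := Fin.snoc_castSucc (α := fun _ => Fin k) (p := s) (x := x)
      (i := ⟨i + 1, by omega⟩)
    exact fun hh => hs i h ((e1.symm.trans hh).trans e2)
  · have hi1 : i = m := by omega
    subst hi1
    have e1 := Fin.snoc_castSucc (α := fun _ => Fin k) (p := s) (x := x)
      (i := ⟨i, Nat.lt_succ_self i⟩)
    have e2 := Fin.snoc_last (α := fun _ => Fin k) (p := s) (x := x)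
    exact fun hh => hx (e2.symm.trans (hh.symm.trans e1))

noncomputable def Pm (k m : ℕ) : Matrix (Vtx k (m + 3)) (Vtx k (m + 2)) ℚ :=
  Matrix.of fun u s => if s.1 = sufFn u.1 then 1 else 0

noncomputable def Bm (k m : ℕ) : Matrix (Vtx k (m + 2)) (Vtx k (m + 3)) ℚ :=
  Matrix.of fun s v => if preFn v.1 = s.1 then 1 else 0

lemma adj_eq_mul (k m : ℕ) : AdjMat k (m + 3) = Pm k m * Bm k m := by
  ext u v
  have hsum : (Pm k m * Bm k m) u v = if preFn v.1 = sufFn u.1 then (1 : ℚ) else 0 := by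
    rw [Matrix.mul_apply]
    rw [Finset.sum_eq_single (⟨sufFn u.1, isAdjHop_sufFn u.2⟩ : Vtx k (m + 2))]
    · simp [Pm, Bm]
    · intro b _ hb
      have hb' : ¬(b.1 = sufFn u.1) := fun h => hb (Subtype.ext h)
      simp [Pm, hb']
    · intro h; exact absurd (Finset.mem_univ _) h
  rw [hsum]
  classical
  show (if Edge k (m + 3) u v then (1 : ℚ) else 0) = _
  refine if_congr ?_ rfl rfl
  constructor
  · rintro ⟨h1, h2⟩
    funext j
    exact h1 j.1 (by omega : j.1 + 1 ≤ m + 1)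
  · intro h
    constructor
    · intro j hj
      exact congrFun h ⟨j, by omega⟩
    · intro _
      have hv := v.2 m (by omega : m + 1 < m + 2)
      have h5 : v.1 ⟨m, by omega⟩ = u.1 ⟨m + 1, by omega⟩ := congrFun h ⟨m, by omega⟩
      exact fun hh => hv (h5.trans hh)

lemma preFn_snoc {k m : ℕ} (s : Fin (m + 1) → Fin k) (x : Fin k) :
    preFn (Fin.snoc s x) = s :=
  funext fun j => Fin.snoc_castSucc (α := fun _ => Fin k) (p := s) (x := x) (i := j)

lemma sufFn_snoc_eq {k m : ℕ} {s t : Fin (m + 1) → Fin k}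
    (hfirst : ∀ j : ℕ, (h : j + 1 ≤ m) → t ⟨j, by omega⟩ = s ⟨j + 1, by omega⟩) :
    sufFn (Fin.snoc s (t ⟨m, Nat.lt_succ_self m⟩)) = t := by
  funext j
  rcases j with ⟨j, hj⟩
  by_cases hjm : j < m
  · have e1 := Fin.snoc_castSucc (α := fun _ => Fin k) (p := s)
      (x := t ⟨m, Nat.lt_succ_self m⟩) (i := ⟨j + 1, by omega⟩)
    exact e1.trans (hfirst j (by omega)).symm
  · have hj2 : j = m := by omega
    subst hj2
    exact Fin.snoc_last (α := fun _ => Fin k) (p := s) (x := t ⟨j, Nat.lt_succ_self j⟩)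

lemma eq_snoc_of {k m : ℕ} {s t : Fin (m + 1) → Fin k} {v : Fin (m + 2) → Fin k}
    (h1 : preFn v = s) (h2 : sufFn v = t) :
    v = Fin.snoc s (t ⟨m, Nat.lt_succ_self m⟩) := by
  funext i
  rcases i with ⟨i, hi⟩
  by_cases him : i < m + 1
  · have e1 := Fin.snoc_castSucc (α := fun _ => Fin k) (p := s)
      (x := t ⟨m, Nat.lt_succ_self m⟩) (i := ⟨i, him⟩)
    exact (congrFun h1 ⟨i, him⟩).trans e1.symm
  · have hi2 : i = m + 1 := by omega
    subst hi2
    have e2 := Fin.snoc_last (α := fun _ => Fin k) (p := s)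
      (x := t ⟨m, Nat.lt_succ_self m⟩)
    exact (congrFun h2 ⟨m, Nat.lt_succ_self m⟩).trans e2.symm

lemma mul_eq_adj (k m : ℕ) : Bm k m * Pm k m = AdjMat k (m + 2) := by
  ext s t
  classical
  show _ = (if Edge k (m + 2) s t then (1 : ℚ) else 0)
  rw [Matrix.mul_apply]
  by_cases hE : Edge k (m + 2) s t
  · rw [if_pos hE]
    have hx : t.1 ⟨m, Nat.lt_succ_self m⟩ ≠ s.1 ⟨m, Nat.lt_succ_self m⟩ :=
      Ne.symm (hE.2 (by omega))
    rw [Finset.sum_eq_single (⟨Fin.snoc s.1 (t.1 ⟨m, Nat.lt_succ_self m⟩),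
      isAdjHop_snoc s.2 hx⟩ : Vtx k (m + 3))]
    · have h1 : preFn (Fin.snoc s.1 (t.1 ⟨m, Nat.lt_succ_self m⟩)) = s.1 := preFn_snoc _ _
      have h2 : sufFn (Fin.snoc s.1 (t.1 ⟨m, Nat.lt_succ_self m⟩)) = t.1 :=
        sufFn_snoc_eq hE.1
      simp [Bm, Pm, h1, h2]
    · intro v _ hv
      by_cases h1 : preFn v.1 = s.1
      · by_cases h2 : t.1 = sufFn v.1
        · exact absurd (Subtype.ext (eq_snoc_of h1 h2.symm)) hv
        · simp [Pm, h2]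
      · simp [Bm, h1]
    · intro h; exact absurd (Finset.mem_univ _) h
  · rw [if_neg hE]
    apply Finset.sum_eq_zero
    intro v _
    by_cases h1 : preFn v.1 = s.1
    · by_cases h2 : t.1 = sufFn v.1
      · refine absurd ⟨?_, ?_⟩ hE
        · intro j hj
          have e1 : t.1 ⟨j, by omega⟩ = v.1 ⟨j + 1, by omega⟩ := congrFun h2 ⟨j, by omega⟩
          have e2 : v.1 ⟨j + 1, by omega⟩ = s.1 ⟨j + 1, by omega⟩ := congrFun h1 ⟨j + 1, by omega⟩
          exact e1.trans e2
        · intro _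
          have hv2 := v.2 m (by omega : m + 1 < m + 2)
          have e1 : v.1 ⟨m, by omega⟩ = s.1 ⟨m, by omega⟩ := congrFun h1 ⟨m, by omega⟩
          have e2 : t.1 ⟨m, by omega⟩ = v.1 ⟨m + 1, by omega⟩ := congrFun h2 ⟨m, by omega⟩
          exact fun hh => hv2 (e1.trans (hh.trans e2))
      · simp [Pm, h2]
    · simp [Bm, h1]

def baseEquiv (k : ℕ) : Vtx k 2 ≃ Fin k :=
  (Equiv.subtypeUnivEquiv (fun _ => fun _ h => absurd h (by omega))).trans
    (Equiv.funUnique (Fin 1) (Fin k))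

lemma card_base (k : ℕ) : Fintype.card (Vtx k 2) = k := by
  rw [Fintype.card_congr (baseEquiv k), Fintype.card_fin]

def fiberEquiv (k m : ℕ) (s : Vtx k (m + 2)) :
    {v : Vtx k (m + 3) // (⟨preFn v.1, isAdjHop_preFn v.2⟩ : Vtx k (m + 2)) = s} ≃
      {x : Fin k // x ≠ s.1 ⟨m, Nat.lt_succ_self m⟩} where
  toFun := fun ⟨v, hv⟩ => ⟨v.1 ⟨m + 1, by omega⟩, by
    have hp : preFn v.1 = s.1 := congrArg Subtype.val hv
    have e1 : v.1 ⟨m, by omega⟩ = s.1 ⟨m, Nat.lt_succ_self m⟩ :=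
      congrFun hp ⟨m, Nat.lt_succ_self m⟩
    have h2 := v.2 m (by omega : m + 1 < m + 2)
    exact fun hh => h2 (e1.trans hh.symm)⟩
  invFun := fun ⟨x, hx⟩ => ⟨⟨Fin.snoc s.1 x, isAdjHop_snoc s.2 hx⟩,
    Subtype.ext (preFn_snoc s.1 x)⟩
  left_inv := fun ⟨v, hv⟩ => by
    have hp : preFn v.1 = s.1 := congrArg Subtype.val hv
    exact Subtype.ext (Subtype.ext (eq_snoc_of hp rfl).symm)
  right_inv := fun ⟨x, hx⟩ =>
    Subtype.ext (Fin.snoc_last (α := fun _ => Fin k) (p := s.1) (x := x))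

lemma card_step (k m : ℕ) :
    Fintype.card (Vtx k (m + 3)) = Fintype.card (Vtx k (m + 2)) * (k - 1) := by
  classical
  rw [← Fintype.card_congr (Equiv.sigmaFiberEquiv
    (fun v : Vtx k (m + 3) => (⟨preFn v.1, isAdjHop_preFn v.2⟩ : Vtx k (m + 2))))]
  rw [Fintype.card_sigma]
  have hfib : ∀ s : Vtx k (m + 2),
      Fintype.card {v : Vtx k (m + 3) //
        (⟨preFn v.1, isAdjHop_preFn v.2⟩ : Vtx k (m + 2)) = s} = k - 1 := by
    intro s
    rw [Fintype.card_congr (fiberEquiv k m s)]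
    simp [Fintype.card_subtype_compl]
  rw [Finset.sum_congr rfl (fun s _ => hfib s), Finset.sum_const, smul_eq_mul,
    Finset.card_univ]

lemma card_vtx (k m : ℕ) : Fintype.card (Vtx k (m + 2)) = k * (k - 1) ^ m := by
  induction m with
  | zero => simpa using card_base k
  | succ m ih => rw [card_step, ih, pow_succ, mul_assoc]

section DetPart
variable {R : Type*} [CommRing R] {I J : Type*} [Fintype I] [Fintype J] [DecidableEq I] [DecidableEq J]

lemma det_aux (A : Matrix I J R) (B : Matrix J I R) (c : R) :
    (c • (1 : Matrix I I R) - A * B).det * c ^ Fintype.card J =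
      c ^ Fintype.card I * (c • (1 : Matrix J J R) - B * A).det := by
  have h1 : Matrix.fromBlocks (c • (1 : Matrix I I R)) A B 1 *
      Matrix.fromBlocks 1 0 (-B) 1 = Matrix.fromBlocks (c • (1 : Matrix I I R) - A * B) A 0 1 := by
    rw [Matrix.fromBlocks_multiply]
    congr 1 <;> simp [sub_eq_add_neg, Matrix.mul_neg]
  have h2 : Matrix.fromBlocks (1 : Matrix I I R) 0 (-B) 1 *
      Matrix.fromBlocks 1 A B (c • (1 : Matrix J J R)) =
      Matrix.fromBlocks 1 A 0 (c • (1 : Matrix J J R) - B * A) := by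
    rw [Matrix.fromBlocks_multiply]
    congr 1 <;> simp [sub_eq_add_neg, Matrix.neg_mul, add_comm]
  have h3 : Matrix.fromBlocks (c • (1 : Matrix I I R)) A B 1 *
      Matrix.fromBlocks 1 0 0 (c • (1 : Matrix J J R)) =
      Matrix.fromBlocks (c • (1 : Matrix I I R)) 0 0 1 *
      Matrix.fromBlocks 1 A B (c • (1 : Matrix J J R)) := by
    rw [Matrix.fromBlocks_multiply, Matrix.fromBlocks_multiply]
    congr 1 <;> simp [Matrix.smul_mul, Matrix.mul_smul]
  have d1 : (Matrix.fromBlocks (c • (1 : Matrix I I R)) A B 1).det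
      = (c • (1 : Matrix I I R) - A * B).det := by
    have := congrArg Matrix.det h1
    rwa [Matrix.det_mul, Matrix.det_fromBlocks_zero₁₂, Matrix.det_fromBlocks_zero₂₁,
      Matrix.det_one, Matrix.det_one, one_mul, mul_one, mul_one] at this
  have d2 : (Matrix.fromBlocks (1 : Matrix I I R) A B (c • (1 : Matrix J J R))).det
      = (c • (1 : Matrix J J R) - B * A).det := by
    have := congrArg Matrix.det h2
    rwa [Matrix.det_mul, Matrix.det_fromBlocks_zero₁₂, Matrix.det_fromBlocks_zero₂₁,
      Matrix.det_one, Matrix.det_one, one_mul, one_mul, one_mul] at this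
  have := congrArg Matrix.det h3
  rw [Matrix.det_mul, Matrix.det_mul, d1, d2, Matrix.det_fromBlocks_zero₁₂,
    Matrix.det_fromBlocks_zero₂₁, Matrix.det_smul, Matrix.det_smul] at this
  simpa using this

lemma charpoly_eq (M : Matrix I I R) :
    M.charpoly = ((X : R[X]) • (1 : Matrix I I R[X]) - M.map C).det := by
  rw [Matrix.charpoly]
  congr 1
  ext i j
  by_cases h : i = j
  · subst h; simp
  · simp [h, Matrix.one_apply_ne h]

lemma rect_charpoly (A : Matrix I J R) (B : Matrix J I R) :
    (A * B).charpoly * X ^ Fintype.card J = X ^ Fintype.card I * (B * A).charpoly := by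
  rw [charpoly_eq, charpoly_eq, Matrix.map_mul, Matrix.map_mul]
  exact det_aux _ _ _
end DetPart

lemma det_ones (k : ℕ) (hk : 1 ≤ k) :
    ((X + 1 : ℚ[X]) • (1 : Matrix (Fin k) (Fin k) ℚ[X]) -
        Matrix.of (fun _ _ => 1)).det =
      (X + 1) ^ (k - 1) * (X + 1 - (k : ℚ[X])) := by
  have hA : (Matrix.of (fun _ _ => (1 : ℚ[X])) : Matrix (Fin k) Unit ℚ[X]) *
      (Matrix.of (fun _ _ => (1 : ℚ[X])) : Matrix Unit (Fin k) ℚ[X]) =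
      Matrix.of (fun _ _ => 1) := by
    ext i j; simp [Matrix.mul_apply]
  have hB : (Matrix.of (fun _ _ => (1 : ℚ[X])) : Matrix Unit (Fin k) ℚ[X]) *
      (Matrix.of (fun _ _ => (1 : ℚ[X])) : Matrix (Fin k) Unit ℚ[X]) =
      Matrix.of (fun _ _ => (k : ℚ[X])) := by
    ext i j; simp [Matrix.mul_apply]
  have h := det_aux (R := ℚ[X])
    (Matrix.of (fun _ _ => (1 : ℚ[X])) : Matrix (Fin k) Unit ℚ[X])
    (Matrix.of (fun _ _ => (1 : ℚ[X])) : Matrix Unit (Fin k) ℚ[X]) (X + 1)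
  rw [hA, hB] at h
  simp only [Fintype.card_unit, Fintype.card_fin, pow_one] at h
  have hdet : ((X + 1 : ℚ[X]) • (1 : Matrix Unit Unit ℚ[X]) -
      Matrix.of (fun _ _ => (k : ℚ[X]))).det = X + 1 - (k : ℚ[X]) := by
    rw [Matrix.det_unique]
    simp
  rw [hdet] at h
  have hX1 : (X + 1 : ℚ[X]) ≠ 0 := by
    intro hcon
    have := congrArg (Polynomial.coeff · 1) hcon
    simp [Polynomial.coeff_one] at this
  apply mul_right_cancel₀ hX1
  rw [h]
  have : (X + 1 : ℚ[X]) ^ k = (X + 1) ^ (k - 1) * (X + 1) := by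
    conv_lhs => rw [show k = (k - 1) + 1 by omega]
    rw [pow_succ]
  rw [this]; ring

noncomputable def Ek (k : ℕ) : Matrix (Fin k) (Fin k) ℚ :=
  Matrix.of fun a b => if a ≠ b then 1 else 0

lemma charpoly_Ek (k : ℕ) (hk : 1 ≤ k) :
    (Ek k).charpoly = (X - C ((k : ℚ) - 1)) * (X + C 1) ^ (k - 1) := by
  rw [charpoly_eq]
  have hmat : (X : ℚ[X]) • (1 : Matrix (Fin k) (Fin k) ℚ[X]) - (Ek k).map C =
      ((X : ℚ[X]) + 1) • (1 : Matrix (Fin k) (Fin k) ℚ[X]) - Matrix.of (fun _ _ => 1) := by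
    ext i j
    by_cases h : i = j
    · subst h; simp [Ek]
    · simp [Ek, h, Matrix.one_apply_ne h]
  rw [hmat, det_ones k hk]
  have h1 : (X + 1 - (k : ℚ[X])) = X - C ((k : ℚ) - 1) := by
    rw [map_sub, Polynomial.C_1, map_natCast]
    ring
  have h2 : (X + 1 : ℚ[X]) = X + C 1 := by rw [Polynomial.C_1]
  rw [h1, h2]
  ring

lemma adj_two_reindex (k : ℕ) :
    Matrix.reindex (baseEquiv k) (baseEquiv k) (AdjMat k 2) = Ek k := by
  ext a b
  classical
  show (if Edge k 2 ((baseEquiv k).symm a) ((baseEquiv k).symm b) then (1 : ℚ) else 0)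
    = (if a ≠ b then (1 : ℚ) else 0)
  refine if_congr ?_ rfl rfl
  constructor
  · intro hE
    exact hE.2 (by omega)
  · intro hab
    exact ⟨fun j hj => absurd hj (by omega), fun _ => hab⟩

lemma charpoly_adj_two (k : ℕ) (hk : 1 ≤ k) :
    (AdjMat k 2).charpoly = (X - C ((k : ℚ) - 1)) * (X + C 1) ^ (k - 1) := by
  rw [← Matrix.charpoly_reindex (baseEquiv k), adj_two_reindex, charpoly_Ek k hk]

theorem aux_main (k : ℕ) (hk : 2 ≤ k) (m : ℕ) :
    (AdjMat k (m + 2)).charpoly =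
      (X - C ((k : ℚ) - 1)) * (X + C 1) ^ (k - 1) * X ^ (k * (k - 1) ^ m - k) := by
  induction m with
  | zero =>
    have h0 : k * (k - 1) ^ 0 - k = 0 := by simp
    rw [h0, pow_zero, mul_one]
    exact charpoly_adj_two k (by omega)
  | succ m ih =>
    have h := rect_charpoly (Pm k m) (Bm k m)
    rw [← adj_eq_mul, mul_eq_adj, ih] at h
    have c1 : Fintype.card (Vtx k (m + 2)) = k * (k - 1) ^ m := card_vtx k m
    have c2 : Fintype.card (Vtx k (m + 3)) = k * (k - 1) ^ (m + 1) := card_vtx k (m + 1)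
    rw [c1, c2] at h
    have hp : 0 < (k - 1) ^ m := pow_pos (by omega) m
    have hp1 : 0 < (k - 1) ^ (m + 1) := pow_pos (by omega) (m + 1)
    have ha : k ≤ k * (k - 1) ^ m := Nat.le_mul_of_pos_right _ hp
    have hb : k ≤ k * (k - 1) ^ (m + 1) := Nat.le_mul_of_pos_right _ hp1
    apply mul_right_cancel₀ (pow_ne_zero (k * (k - 1) ^ m) (Polynomial.X_ne_zero (R := ℚ)))
    rw [h]
    have e1 : (X : ℚ[X]) ^ (k * (k - 1) ^ (m + 1)) *
        ((X - C ((k : ℚ) - 1)) * (X + C 1) ^ (k - 1) * X ^ (k * (k - 1) ^ m - k)) =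
        (X - C ((k : ℚ) - 1)) * (X + C 1) ^ (k - 1) *
          X ^ (k * (k - 1) ^ m - k + k * (k - 1) ^ (m + 1)) := by
      rw [pow_add]; ring
    have e2 : (X - C ((k : ℚ) - 1)) * (X + C 1) ^ (k - 1) *
        X ^ (k * (k - 1) ^ (m + 1) - k) * X ^ (k * (k - 1) ^ m) =
        (X - C ((k : ℚ) - 1)) * (X + C 1) ^ (k - 1) *
          X ^ (k * (k - 1) ^ (m + 1) - k + k * (k - 1) ^ m) := by
      rw [pow_add]; ring
    rw [e1, e2, show k * (k - 1) ^ m - k + k * (k - 1) ^ (m + 1) =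
      k * (k - 1) ^ (m + 1) - k + k * (k - 1) ^ m from by omega]


open Polynomial in
/-- The characteristic polynomial of the adjacency matrix of `G_k^n`
is `(X - (k-1)) * (X + 1)^(k-1) * X^(ℓ - k)` with `ℓ = k * (k-1)^(n-2)`. -/
theorem stmt_9 (k n : ℕ) (hk : 2 ≤ k) (hn : 2 ≤ n) :
    (AdjMat k n).charpoly =
      (X - C ((k : ℚ) - 1)) * (X + C 1) ^ (k - 1) *
        X ^ (k * (k - 1) ^ (n - 2) - k) := by
  obtain ⟨m, rfl⟩ : ∃ m, n = m + 2 := ⟨n - 2, by omega⟩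
  exact aux_main k hk m
end

section
/- Let k ≥ 2 and n ≥ 2, let A be the directed adjacency matrix of the corresponding graph G_k^n, set ℓ = k·(k-1)^(n-2), and let L = (k-1)·I - A, where I is the identity matrix of the same size as A. Then the characteristic polynomial of L over ℚ equals X · (X - k)^(k-1) · (X - (k-1))^(ℓ - k); equivalently, the eigenvalues of L are 0 with multiplicity 1, k with multiplicity k-1, and k-1 with multiplicity ℓ - k. -/
namespace Stmt10

open Matrix Polynomial

variable {k : ℕ}

def dLast {m : ℕ} (u : Fin (m + 1) → Fin k) (j : Fin m) : Fin k := u ⟨j, by omega⟩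

def dFirst {m : ℕ} (u : Fin (m + 1) → Fin k) (j : Fin m) : Fin k := u ⟨(j : ℕ) + 1, by omega⟩

def ext' {m : ℕ} (w : Fin m → Fin k) (c : Fin k) (j : Fin (m + 1)) : Fin k :=
  if h : (j : ℕ) < m then w ⟨j, h⟩ else c

lemma hop_dLast {m : ℕ} {u : Fin (m + 1) → Fin k} (hu : IsAdjHop k (m + 1) u) :
    IsAdjHop k m (dLast u) := fun i h => hu i (by omega)

lemma hop_dFirst {m : ℕ} {u : Fin (m + 1) → Fin k} (hu : IsAdjHop k (m + 1) u) :
    IsAdjHop k m (dFirst u) := fun i h => hu (i + 1) (by omega)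

lemma hop_ext {m : ℕ} {w : Fin (m + 1) → Fin k} (hw : IsAdjHop k (m + 1) w) {c : Fin k}
    (hc : c ≠ w ⟨m, by omega⟩) : IsAdjHop k (m + 2) (ext' w c) := by
  intro i h
  by_cases hi : i + 1 < m + 1
  · have h1 : ext' w c ⟨i, by omega⟩ = w ⟨i, by omega⟩ := dif_pos (show i < m + 1 by omega)
    have h2 : ext' w c ⟨i + 1, h⟩ = w ⟨i + 1, hi⟩ := dif_pos (show i + 1 < m + 1 by omega)
    rw [h1, h2]; exact hw i hi
  · have h1 : ext' w c ⟨i, by omega⟩ = w ⟨i, by omega⟩ := dif_pos (show i < m + 1 by omega)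
    have h2 : ext' w c ⟨i + 1, h⟩ = c := dif_neg (show ¬ (i + 1 < m + 1) by omega)
    rw [h1, h2]
    intro hh
    apply hc
    have him : (⟨i, show i < m + 1 by omega⟩ : Fin (m + 1)) = ⟨m, by omega⟩ :=
      Fin.ext (show i = m by omega)
    rw [him] at hh
    exact hh.symm

def vLast {m : ℕ} (u : Vtx k (m + 3)) : Vtx k (m + 2) := ⟨dLast u.1, hop_dLast u.2⟩

def vFirst {m : ℕ} (u : Vtx k (m + 3)) : Vtx k (m + 2) := ⟨dFirst u.1, hop_dFirst u.2⟩

lemma edge_succ_iff {m : ℕ} (u v : Vtx k (m + 3)) :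
    Edge k (m + 3) u v ↔ vFirst u = vLast v := by
  constructor
  · rintro ⟨h1, _⟩
    apply Subtype.ext; funext j
    exact (h1 j (by omega)).symm
  · intro h
    have h' : ∀ j : Fin (m + 1), dFirst u.1 j = dLast v.1 j := fun j => by
      rw [show dFirst u.1 = (vFirst u).1 from rfl, h]; rfl
    constructor
    · intro j hj
      exact (h' ⟨j, by omega⟩).symm
    · intro h2
      have e1 : u.1 ⟨m + 1, by omega⟩ = v.1 ⟨m, by omega⟩ := h' ⟨m, by omega⟩
      have e2 := v.2 m (by omega)
      exact fun hx => e2 (e1 ▸ hx)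

def vExt {m : ℕ} (w : Vtx k (m + 2)) (c : Fin k) (hc : c ≠ w.1 ⟨m, by omega⟩) :
    Vtx k (m + 3) :=
  ⟨ext' w.1 c, hop_ext w.2 hc⟩

lemma vLast_vExt {m : ℕ} (w : Vtx k (m + 2)) (c : Fin k) (hc : c ≠ w.1 ⟨m, by omega⟩) :
    vLast (vExt w c hc) = w :=
  Subtype.ext (funext fun j => dif_pos j.2)

lemma vExt_last {m : ℕ} (w : Vtx k (m + 2)) (c : Fin k) (hc : c ≠ w.1 ⟨m, by omega⟩) :
    (vExt w c hc).1 ⟨m + 1, by omega⟩ = c :=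
  dif_neg (show ¬ (m + 1 < m + 1) by omega)

lemma vExt_eq_self {m : ℕ} (u : Vtx k (m + 3)) (hne : u.1 ⟨m + 1, by omega⟩ ≠ (vLast u).1 ⟨m, by omega⟩) :
    vExt (vLast u) (u.1 ⟨m + 1, by omega⟩) hne = u := by
  apply Subtype.ext
  funext j
  by_cases hj : (j : ℕ) < m + 1
  · have h1 : (vExt (vLast u) (u.1 ⟨m + 1, by omega⟩) hne).1 j = (vLast u).1 ⟨j, hj⟩ :=
      dif_pos hj
    rw [h1]
    exact congrArg u.1 (Fin.ext rfl)
  · have h1 : (vExt (vLast u) (u.1 ⟨m + 1, by omega⟩) hne).1 j = u.1 ⟨m + 1, by omega⟩ :=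
      dif_neg hj
    rw [h1]
    exact congrArg u.1 (Fin.ext (show m + 1 = (j : ℕ) by omega))

/-- The overlap condition: first clause of `Edge`. -/
def Ov {m : ℕ} (w w' : Vtx k (m + 2)) : Prop :=
  ∀ j : ℕ, (h : j + 1 ≤ m) → w'.1 ⟨j, by omega⟩ = w.1 ⟨j + 1, by omega⟩

lemma edge_iff {m : ℕ} (w w' : Vtx k (m + 2)) :
    Edge k (m + 2) w w' ↔ Ov w w' ∧ w.1 ⟨m, by omega⟩ ≠ w'.1 ⟨m, by omega⟩ := by
  constructor
  · rintro ⟨h1, h2⟩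
    exact ⟨fun j hj => h1 j hj, h2 (by omega)⟩
  · rintro ⟨h1, h2⟩
    exact ⟨fun j hj => h1 j hj, fun _ => h2⟩

lemma vFirst_vExt_iff {m : ℕ} (w w' : Vtx k (m + 2)) (c : Fin k) (hc : c ≠ w.1 ⟨m, by omega⟩) :
    vFirst (vExt w c hc) = w' ↔ (Ov w w' ∧ c = w'.1 ⟨m, by omega⟩) := by
  constructor
  · intro h
    have h' : ∀ j : Fin (m + 1), (vFirst (vExt w c hc)).1 j = w'.1 j := fun j => by rw [h]
    constructor
    · intro j hj
      have e1 := h' ⟨j, by omega⟩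
      have e2 : (vFirst (vExt w c hc)).1 ⟨j, by omega⟩ = w.1 ⟨j + 1, by omega⟩ :=
        dif_pos (show j + 1 < m + 1 by omega)
      rw [← e1, e2]
    · have e1 := h' ⟨m, by omega⟩
      have e2 : (vFirst (vExt w c hc)).1 ⟨m, by omega⟩ = c :=
        dif_neg (show ¬ (m + 1 < m + 1) by omega)
      rw [← e1, e2]
  · rintro ⟨h1, h2⟩
    apply Subtype.ext
    funext j
    by_cases hj : (j : ℕ) + 1 < m + 1
    · have e2 : (vFirst (vExt w c hc)).1 j = w.1 ⟨(j : ℕ) + 1, by omega⟩ := dif_pos hj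
      rw [e2]
      exact (h1 j (by omega)).symm
    · have e2 : (vFirst (vExt w c hc)).1 j = c := dif_neg hj
      rw [e2, h2]
      exact congrArg w'.1 (Fin.ext (show m = (j : ℕ) by omega))

lemma edge_vLast_vFirst {m : ℕ} (u : Vtx k (m + 3)) :
    Edge k (m + 2) (vLast u) (vFirst u) :=
  (edge_iff _ _).mpr ⟨fun _ _ => rfl, u.2 m (by omega)⟩

lemma fiber_iff {m : ℕ} (w w' : Vtx k (m + 2)) (hE : Edge k (m + 2) w w') (u : Vtx k (m + 3)) :
    (vLast u = w ∧ vFirst u = w') ↔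
      u = vExt w (w'.1 ⟨m, by omega⟩) (fun he => ((edge_iff w w').mp hE).2 he.symm) := by
  constructor
  · rintro ⟨h1, h2⟩
    subst h1; subst h2
    exact (vExt_eq_self u (Ne.symm (u.2 m (show m + 1 < m + 2 by omega)))).symm
  · rintro rfl
    refine ⟨vLast_vExt _ _ _, ?_⟩
    exact (vFirst_vExt_iff w w' _ _).mpr ⟨((edge_iff w w').mp hE).1, rfl⟩

open Classical in
lemma sum_entry {m : ℕ} (w w' : Vtx k (m + 2)) :
    (∑ u : Vtx k (m + 3),
      (if vLast u = w then (1 : ℚ) else 0) * (if vFirst u = w' then 1 else 0))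
      = if Edge k (m + 2) w w' then 1 else 0 := by
  by_cases hE : Edge k (m + 2) w w'
  · rw [if_pos hE]
    set u₀ := vExt w (w'.1 ⟨m, by omega⟩) (fun he => ((edge_iff w w').mp hE).2 he.symm) with hu₀
    have hterm : ∀ u : Vtx k (m + 3),
        (if vLast u = w then (1 : ℚ) else 0) * (if vFirst u = w' then 1 else 0)
          = if u = u₀ then 1 else 0 := by
      intro u
      by_cases h : u = u₀
      · have := (fiber_iff w w' hE u).mpr h
        rw [if_pos this.1, if_pos this.2, if_pos h, one_mul]
      · rw [if_neg h]
        by_cases h1 : vLast u = w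
        · by_cases h2 : vFirst u = w'
          · exact absurd ((fiber_iff w w' hE u).mp ⟨h1, h2⟩) h
          · rw [if_neg h2, mul_zero]
        · rw [if_neg h1, zero_mul]
    rw [Finset.sum_congr rfl fun u _ => hterm u]
    simp
  · rw [if_neg hE]
    apply Finset.sum_eq_zero
    intro u _
    by_cases h1 : vLast u = w
    · by_cases h2 : vFirst u = w'
      · exact absurd (h1 ▸ h2 ▸ edge_vLast_vFirst u) hE
      · rw [if_neg h2, mul_zero]
    · rw [if_neg h1, zero_mul]

noncomputable def Pmat (k m : ℕ) : Matrix (Vtx k (m + 3)) (Vtx k (m + 2)) ℚ :=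
  Matrix.of fun u w => if vFirst u = w then 1 else 0

noncomputable def Qmat (k m : ℕ) : Matrix (Vtx k (m + 3)) (Vtx k (m + 2)) ℚ :=
  Matrix.of fun u w => if vLast u = w then 1 else 0

open Classical in
lemma adj_factor (m : ℕ) : AdjMat k (m + 3) = Pmat k m * (Qmat k m)ᵀ := by
  ext u v
  rw [Matrix.mul_apply]
  simp only [Pmat, Qmat, Matrix.of_apply, Matrix.transpose_apply, ite_mul, one_mul, zero_mul,
    Finset.sum_ite_eq, Finset.mem_univ, if_true]
  show (if Edge k (m + 3) u v then (1 : ℚ) else 0) = _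
  by_cases h : Edge k (m + 3) u v
  · rw [if_pos h, if_pos ((edge_succ_iff u v).mp h).symm]
  · rw [if_neg h, if_neg (fun he => h ((edge_succ_iff u v).mpr he.symm))]

lemma adj_refactor (m : ℕ) : (Qmat k m)ᵀ * Pmat k m = AdjMat k (m + 2) := by
  ext w w'
  rw [Matrix.mul_apply]
  simp only [Pmat, Qmat, Matrix.of_apply, Matrix.transpose_apply]
  exact sum_entry w w'

def gmap {m : ℕ} : (Σ w : Vtx k (m + 2), {c : Fin k // c ≠ w.1 ⟨m, by omega⟩}) → Vtx k (m + 3) :=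
  fun p => vExt p.1 p.2.1 p.2.2

lemma gmap_bij {m : ℕ} : Function.Bijective (gmap (k := k) (m := m)) := by
  constructor
  · rintro ⟨w, c, hc⟩ ⟨w', c', hc'⟩ h
    have hw : w = w' := by
      rw [← vLast_vExt w c hc, ← vLast_vExt w' c' hc']
      exact congrArg vLast h
    subst hw
    have hcc : c = c' := by
      rw [← vExt_last w c hc, ← vExt_last w c' hc']
      exact congrArg (fun u : Vtx k (m + 3) => u.1 ⟨m + 1, by omega⟩) h
    subst hcc
    rfl
  · intro u
    exact ⟨⟨vLast u, u.1 ⟨m + 1, by omega⟩, Ne.symm (u.2 m (show m + 1 < m + 2 by omega))⟩,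
      vExt_eq_self u _⟩

lemma card_ne (a : Fin k) : Fintype.card {c : Fin k // c ≠ a} = k - 1 := by
  rw [Fintype.card_subtype_compl, Fintype.card_subtype_eq, Fintype.card_fin]

lemma card_step (m : ℕ) :
    Fintype.card (Vtx k (m + 3)) = Fintype.card (Vtx k (m + 2)) * (k - 1) := by
  rw [← Fintype.card_of_bijective (gmap_bij (k := k) (m := m)), Fintype.card_sigma]
  simp [card_ne, mul_comm]

lemma card_base : Fintype.card (Vtx k 2) = k := by
  have e : Vtx k 2 ≃ Fin k :=
    { toFun := fun w => w.1 ⟨0, by omega⟩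
      invFun := fun c => ⟨fun _ => c, fun i h => absurd h (by omega)⟩
      left_inv := fun w => Subtype.ext (funext fun j => congrArg w.1 (Fin.ext (show (0:ℕ) = (j:ℕ) by omega)))
      right_inv := fun c => rfl }
  rw [Fintype.card_congr e, Fintype.card_fin]

lemma card_vtx (m : ℕ) : Fintype.card (Vtx k (m + 2)) = k * (k - 1) ^ m := by
  induction m with
  | zero => simp [card_base]
  | succ m ih => rw [card_step, ih, pow_succ, mul_assoc]

lemma gen_det {α β : Type*} [Fintype α] [Fintype β] [DecidableEq α] [DecidableEq β]
    {R : Type*} [CommRing R] (y : R) (M : Matrix α β R) (N : Matrix β α R) :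
    (y • 1 - M * N).det * y ^ (Fintype.card β) = y ^ (Fintype.card α) * (y • 1 - N * M).det := by
  have key : (fromBlocks (y • 1) M N 1 : Matrix (α ⊕ β) (α ⊕ β) R) * fromBlocks 1 0 0 (y • 1)
      = fromBlocks (y • 1) 0 0 (1 : Matrix β β R) * fromBlocks 1 M N (y • 1) := by
    simp [fromBlocks_multiply, Matrix.mul_smul, Matrix.smul_mul]
  have h1 := congrArg Matrix.det key
  rw [det_mul, det_mul, det_fromBlocks_zero₁₂, det_fromBlocks_zero₁₂, det_fromBlocks_one₁₁,
    det_fromBlocks_one₂₂, det_one, det_smul, det_smul, det_one] at h1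
  simp only [one_mul, mul_one, det_one] at h1
  linear_combination h1

lemma charmatrix_smul_one_sub {α : Type*} [Fintype α] [DecidableEq α]
    {R : Type*} [CommRing R] (c : R) (S : Matrix α α R) :
    charmatrix (c • 1 - S) = (X - C c) • (1 : Matrix α α R[X]) + S.map C := by
  ext i j
  by_cases h : i = j
  · subst h
    simp [charmatrix_apply_eq, Matrix.one_apply, Matrix.sub_apply, Matrix.smul_apply]
    ring
  · simp [charmatrix_apply_ne _ _ _ h, Matrix.one_apply, h, Matrix.sub_apply, Matrix.smul_apply]

lemma charpoly_step {α β : Type*} [Fintype α] [Fintype β] [DecidableEq α] [DecidableEq β]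
    (c : ℚ) (M : Matrix α β ℚ) (N : Matrix β α ℚ) :
    (c • 1 - M * N).charpoly * (X - C c) ^ (Fintype.card β)
      = (X - C c) ^ (Fintype.card α) * (c • 1 - N * M).charpoly := by
  have hmn : (M.map C) * (-(N.map C)) = -((M*N).map (C : ℚ →+* ℚ[X])) := by
    rw [Matrix.map_mul]; simp [Matrix.mul_neg]
  have hnm : (-(N.map C)) * (M.map C) = -((N*M).map (C : ℚ →+* ℚ[X])) := by
    rw [Matrix.map_mul]; simp [Matrix.neg_mul]
  have h := gen_det (X - C c) (M.map (C : ℚ →+* ℚ[X])) (-(N.map C))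
  rw [hmn, hnm, sub_neg_eq_add, sub_neg_eq_add] at h
  rw [Matrix.charpoly, Matrix.charpoly, charmatrix_smul_one_sub, charmatrix_smul_one_sub]
  exact h

lemma edge_two_iff (u v : Vtx k 2) : Edge k 2 u v ↔ u ≠ v := by
  constructor
  · rintro ⟨_, h2⟩ rfl
    exact h2 (show (0:ℕ) < 1 by omega) rfl
  · intro h
    refine ⟨fun j hj => absurd hj (by omega), fun h0 he => h ?_⟩
    refine Subtype.ext (funext fun j => ?_)
    have hj : j = ⟨0, by omega⟩ := Fin.ext (by omega)
    rw [hj]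
    exact he

open Classical in
lemma adj_two : AdjMat k 2 = Matrix.of (fun _ _ => (1:ℚ)) - 1 := by
  ext u v
  show (if Edge k 2 u v then (1:ℚ) else 0)
    = (Matrix.of (fun _ _ => (1:ℚ)) - 1) u v
  by_cases h : u = v
  · rw [if_neg (fun hE => (edge_two_iff u v).mp hE h), h]
    simp [Matrix.sub_apply, Matrix.one_apply]
  · rw [if_pos ((edge_two_iff u v).mpr h)]
    simp [Matrix.sub_apply, Matrix.one_apply, h]

lemma charpoly_base (hk : 2 ≤ k) :
    (((k:ℚ) - 1) • (1 : Matrix (Vtx k 2) (Vtx k 2) ℚ) - AdjMat k 2).charpoly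
      = X * (X - C (k:ℚ)) ^ (k - 1) := by
  have hL : ((k:ℚ) - 1) • (1 : Matrix (Vtx k 2) (Vtx k 2) ℚ) - AdjMat k 2
      = (k:ℚ) • 1 - Matrix.of (fun _ _ => (1:ℚ)) := by
    rw [adj_two]
    ext u v
    by_cases h : u = v
    · simp [h, Matrix.sub_apply, Matrix.smul_apply, Matrix.one_apply]
    · simp [h, Matrix.sub_apply, Matrix.smul_apply, Matrix.one_apply]
  have hMN : (Matrix.of fun (_ : Vtx k 2) (_ : Unit) => (1:ℚ[X]))
      * (Matrix.of fun (_ : Unit) (_ : Vtx k 2) => (-1:ℚ[X]))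
      = Matrix.of (fun _ _ => (-1 : ℚ[X])) := by
    ext u v
    rw [Matrix.mul_apply]
    simp
  have hNM : (Matrix.of fun (_ : Unit) (_ : Vtx k 2) => (-1:ℚ[X]))
      * (Matrix.of fun (_ : Vtx k 2) (_ : Unit) => (1:ℚ[X]))
      = Matrix.of (fun _ _ => (-(k:ℚ[X]))) := by
    ext u v
    rw [Matrix.mul_apply]
    simp [card_base]
  have key := gen_det (X - C (k:ℚ)) (Matrix.of fun (_ : Vtx k 2) (_ : Unit) => (1:ℚ[X]))
    (Matrix.of fun (_ : Unit) (_ : Vtx k 2) => (-1:ℚ[X]))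
  rw [hMN, hNM, card_base] at key
  have hdetP : ((X - C (k:ℚ)) • 1 - Matrix.of (fun _ _ => (-(k:ℚ[X])))
      : Matrix Unit Unit ℚ[X]).det = X := by
    rw [Matrix.det_unique]
    simp [Matrix.sub_apply, Matrix.smul_apply, Matrix.one_apply]
  rw [hdetP, Fintype.card_unit, pow_one] at key
  have hmain : (((k:ℚ) - 1) • (1 : Matrix (Vtx k 2) (Vtx k 2) ℚ) - AdjMat k 2).charpoly
      = ((X - C (k:ℚ)) • 1 - Matrix.of (fun _ _ => (-1 : ℚ[X]))
          : Matrix (Vtx k 2) (Vtx k 2) ℚ[X]).det := by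
    rw [hL, Matrix.charpoly, charmatrix_smul_one_sub]
    congr 1
    ext u v
    simp [Matrix.sub_apply, Matrix.smul_apply, Matrix.map_apply]
  rw [hmain]
  have hy : (X - C (k:ℚ)) ≠ 0 := Polynomial.X_sub_C_ne_zero _
  apply mul_right_cancel₀ hy
  rw [key]
  have hk1 : k - 1 + 1 = k := by omega
  have hpow : (X - C (k:ℚ)) ^ k = (X - C (k:ℚ)) ^ (k - 1) * (X - C (k:ℚ)) := by
    rw [← pow_succ, hk1]
  rw [hpow]
  ring

theorem main (hk : 2 ≤ k) (m : ℕ) :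
    (((k:ℚ) - 1) • (1 : Matrix (Vtx k (m + 2)) (Vtx k (m + 2)) ℚ) - AdjMat k (m + 2)).charpoly
      = X * (X - C (k:ℚ)) ^ (k - 1) * (X - C ((k:ℚ) - 1)) ^ (k * (k - 1) ^ m - k) := by
  induction m with
  | zero =>
    show (((k:ℚ) - 1) • (1 : Matrix (Vtx k 2) (Vtx k 2) ℚ) - AdjMat k 2).charpoly = _
    rw [charpoly_base hk]
    norm_num
  | succ m ih =>
    have hy : (X - C ((k:ℚ) - 1)) ≠ 0 := Polynomial.X_sub_C_ne_zero _
    have h1 : 1 ≤ (k - 1) ^ m := Nat.one_le_pow _ _ (by omega)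
    have h1' : 1 ≤ (k - 1) ^ (m + 1) := Nat.one_le_pow _ _ (by omega)
    have hc : k ≤ k * (k - 1) ^ m := le_mul_of_one_le_right (Nat.zero_le k) h1
    have hc' : k ≤ k * (k - 1) ^ (m + 1) := le_mul_of_one_le_right (Nat.zero_le k) h1'
    have cv' : Fintype.card (Vtx k (m + 3)) = k * (k - 1) ^ (m + 1) := card_vtx (m + 1)
    have step := charpoly_step ((k:ℚ) - 1) (Pmat k m) (Qmat k m)ᵀ
    rw [← adj_factor, adj_refactor, ih, card_vtx, cv'] at step
    show (((k:ℚ) - 1) • (1 : Matrix (Vtx k (m + 3)) (Vtx k (m + 3)) ℚ)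
        - AdjMat k (m + 3)).charpoly = _
    apply mul_right_cancel₀ (pow_ne_zero (k * (k - 1) ^ m) hy)
    rw [step]
    have hexp : k * (k - 1) ^ (m + 1) + (k * (k - 1) ^ m - k)
        = (k * (k - 1) ^ (m + 1) - k) + k * (k - 1) ^ m := by omega
    calc (X - C ((k:ℚ) - 1)) ^ (k * (k - 1) ^ (m + 1))
          * (X * (X - C (k:ℚ)) ^ (k - 1) * (X - C ((k:ℚ) - 1)) ^ (k * (k - 1) ^ m - k))
        = X * (X - C (k:ℚ)) ^ (k - 1)
            * (X - C ((k:ℚ) - 1)) ^ (k * (k - 1) ^ (m + 1) + (k * (k - 1) ^ m - k)) := by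
          rw [pow_add]; ring
      _ = X * (X - C (k:ℚ)) ^ (k - 1)
            * (X - C ((k:ℚ) - 1)) ^ ((k * (k - 1) ^ (m + 1) - k) + k * (k - 1) ^ m) := by
          rw [hexp]
      _ = X * (X - C (k:ℚ)) ^ (k - 1) * (X - C ((k:ℚ) - 1)) ^ (k * (k - 1) ^ (m + 1) - k)
            * (X - C ((k:ℚ) - 1)) ^ (k * (k - 1) ^ m) := by
          rw [pow_add]; ring

end Stmt10

open Polynomial in
/-- The characteristic polynomial of `L = (k-1)·I - A` is
`X * (X - k)^(k-1) * (X - (k-1))^(ℓ - k)` with `ℓ = k * (k-1)^(n-2)`. -/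
theorem stmt_10 (k n : ℕ) (hk : 2 ≤ k) (hn : 2 ≤ n) :
    (((k : ℚ) - 1) • (1 : Matrix (Vtx k n) (Vtx k n) ℚ) - AdjMat k n).charpoly =
      X * (X - C (k : ℚ)) ^ (k - 1) *
        (X - C ((k : ℚ) - 1)) ^ (k * (k - 1) ^ (n - 2) - k) := by
  obtain ⟨m, rfl⟩ : ∃ m, n = m + 2 := ⟨n - 2, by omega⟩
  simpa [Nat.add_sub_cancel] using Stmt10.main hk m
end
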